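/- For distinct positive integers x, y and a square-free integer q > 1, the following are equivalent: (1) q is coprime with both x and y; (2) there exist Golomb-open neighborhoods U of x and V of y such that the intersection of the closures of U and V equals qℕ⁺; (3) there exist Golomb-open neighborhoods U of x and V of y with the intersection of their closures contained in qℕ⁺. -/

import Mathlib

/-- The base of the Golomb topology: arithmetic progressions `{a + b*n : n ≥ 0}`
with coprime `a, b ≥ 1`, viewed inside the positive integers. -/
def golombBasis : Set (Set ℕ+) :=
  {S | ∃ a b : ℕ, 1 ≤ a ∧ 1 ≤ b ∧ Nat.Coprime a b ∧
    S = {x : ℕ+ | ∃ n : ℕ, (x : ℕ) = a + b * n}}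

/-- The Golomb (relatively prime integer) topology on `ℕ+`. -/
instance golombTopology : TopologicalSpace ℕ+ :=
  TopologicalSpace.generateFrom golombBasis

/-- An arithmetic progression inside `ℕ+`. -/
def Prog (a b : ℕ) : Set ℕ+ := {x : ℕ+ | ∃ n : ℕ, (x : ℕ) = a + b * n}

lemma isOpen_prog {a b : ℕ} (ha : 1 ≤ a) (hb : 1 ≤ b) (h : Nat.Coprime a b) :
    IsOpen (Prog a b) :=
  TopologicalSpace.GenerateOpen.basic _ ⟨a, b, ha, hb, h, rfl⟩

lemma mem_prog {a b : ℕ} {z : ℕ+} (hle : a ≤ (z : ℕ)) (h : (z : ℕ) ≡ a [MOD b]) :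
    z ∈ Prog a b := by
  obtain ⟨c, hc⟩ := (Nat.modEq_iff_dvd' hle).mp h.symm
  exact ⟨c, by omega⟩

lemma self_mem_prog (m : ℕ+) (e : ℕ) : m ∈ Prog (m : ℕ) e := ⟨0, by simp⟩

lemma prog_modEq {a b : ℕ} {z : ℕ+} (h : z ∈ Prog a b) : (z : ℕ) ≡ a [MOD b] := by
  obtain ⟨n, hn⟩ := h
  rw [hn]
  simpa [Nat.ModEq] using (Nat.add_mul_mod_self_left a b n)

lemma prog_anti {a e E : ℕ} (h : e ∣ E) : Prog a E ⊆ Prog a e := by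
  obtain ⟨c, rfl⟩ := h
  rintro z ⟨k, hk⟩
  exact ⟨c * k, by rw [hk]; ring⟩

/-- Every open set contains a basic progression around each of its points. -/
lemma exists_basic {O : Set ℕ+} (hO : IsOpen O) :
    ∀ m : ℕ+, m ∈ O → ∃ e : ℕ, 1 ≤ e ∧ Nat.Coprime (m : ℕ) e ∧ Prog (m : ℕ) e ⊆ O := by
  induction hO with
  | basic S hS =>
    obtain ⟨a, b, ha, hb, hab, rfl⟩ := hS
    intro m hm
    obtain ⟨n, hn⟩ := hm
    refine ⟨b, hb, ?_, ?_⟩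
    · rw [hn]
      exact (Nat.coprime_add_mul_left_left a b n).mpr hab
    · rintro z ⟨k, hk⟩
      exact ⟨n + k, by rw [hk, hn]; ring⟩
  | univ => exact fun m _ => ⟨1, le_refl _, Nat.coprime_one_right _, Set.subset_univ _⟩
  | inter S T hS hT ihS ihT =>
    intro m hm
    obtain ⟨e1, he1, hc1, hs1⟩ := ihS m hm.1
    obtain ⟨e2, he2, hc2, hs2⟩ := ihT m hm.2
    refine ⟨e1 * e2, Nat.one_le_iff_ne_zero.mpr (by positivity), hc1.mul_right hc2, ?_⟩
    rintro z ⟨k, hk⟩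
    exact ⟨hs1 ⟨e2 * k, by rw [hk]; ring⟩, hs2 ⟨e1 * k, by rw [hk]; ring⟩⟩
  | sUnion S hS ih =>
    intro m hm
    obtain ⟨s, hs, hms⟩ := hm
    obtain ⟨e, he, hc, hsub⟩ := ih s hs m hms
    exact ⟨e, he, hc, hsub.trans (Set.subset_sUnion_of_mem hs)⟩

lemma not_dvd_both {m e p : ℕ} (h : Nat.Coprime m e) (hp : p.Prime)
    (h1 : p ∣ m) (h2 : p ∣ e) : False :=
  hp.prime.not_dvd_one (h ▸ Nat.dvd_gcd h1 h2)

/-- Necessity: closure points are congruent modulo coprime divisors of the modulus. -/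
lemma modEq_of_mem_closure {a b e : ℕ} {m : ℕ+} (hm : m ∈ closure (Prog a b))
    (he : e ∣ b) (he1 : 1 ≤ e) (hme : Nat.Coprime (m : ℕ) e) :
    (m : ℕ) ≡ a [MOD e] := by
  have hopen : IsOpen (Prog (m : ℕ) e) := isOpen_prog m.pos he1 hme
  rw [mem_closure_iff] at hm
  obtain ⟨z, hz1, hz2⟩ := hm _ hopen (self_mem_prog m e)
  exact (prog_modEq hz1).symm.trans ((prog_modEq hz2).of_dvd he)

/-- Sufficiency: if every prime of the modulus divides `m`, then `m` is a closure point. -/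
lemma mem_closure_of_primes_dvd {a b : ℕ} (ha : 1 ≤ a) (hb : 1 ≤ b)
    (hab : Nat.Coprime a b) (m : ℕ+)
    (h : ∀ p : ℕ, p.Prime → p ∣ b → p ∣ (m : ℕ)) : m ∈ closure (Prog a b) := by
  rw [mem_closure_iff]
  intro o ho hmo
  obtain ⟨e, he1, hme, hsub⟩ := exists_basic ho m hmo
  have hbe : Nat.Coprime b e := by
    by_contra hc
    obtain ⟨p, hp, hpb, hpe⟩ := Nat.Prime.not_coprime_iff_dvd.mp hc
    exact not_dvd_both hme hp (h p hp hpb) hpe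
  obtain ⟨k, hk1, hk2⟩ := Nat.chineseRemainder hbe a (m : ℕ)
  set t := b * (e * (a + (m : ℕ) + 1)) with ht
  have htpos : a + (m : ℕ) + 1 ≤ t := by
    calc a + (m : ℕ) + 1 = 1 * (1 * (a + (m : ℕ) + 1)) := by ring
    _ ≤ b * (e * (a + (m : ℕ) + 1)) := Nat.mul_le_mul hb (Nat.mul_le_mul he1 (le_refl _))
  have hzb : k + t ≡ a [MOD b] := by
    have : k + t ≡ k [MOD b] := by
      show (k + b * (e * (a + (m : ℕ) + 1))) % b = k % b
      exact Nat.add_mul_mod_self_left k b _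
    exact this.trans hk1
  have hze : k + t ≡ (m : ℕ) [MOD e] := by
    have : k + t ≡ k [MOD e] := by
      have h2 : k + t = k + e * (b * (a + (m : ℕ) + 1)) := by rw [ht]; ring
      rw [h2]
      show (k + e * (b * (a + (m : ℕ) + 1))) % e = k % e
      exact Nat.add_mul_mod_self_left k e _
    exact this.trans hk2
  refine ⟨⟨k + t, by omega⟩, hsub (mem_prog (by simp; omega) hze), mem_prog (by simp; omega) hzb⟩

/-- Sufficiency, mixed version: all primes of the modulus divide `m` except one prime `p`,
for which `m` is congruent to `a` modulo the full power of `p` in the modulus. -/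
lemma mem_closure_mixed {a p v b' : ℕ} (ha : 1 ≤ a) (hp : p.Prime) (hv : 1 ≤ v)
    (hpb' : ¬ p ∣ b') (hb' : 1 ≤ b') (hab : Nat.Coprime a (p ^ v * b'))
    (m : ℕ+) (hpm : ¬ p ∣ (m : ℕ)) (hmod : (m : ℕ) ≡ a [MOD p ^ v])
    (hprimes : ∀ r : ℕ, r.Prime → r ∣ b' → r ∣ (m : ℕ)) :
    m ∈ closure (Prog a (p ^ v * b')) := by
  rw [mem_closure_iff]
  intro o ho hmo
  obtain ⟨e, he1, hme, hsub⟩ := exists_basic ho m hmo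
  set E := e * p ^ v with hE
  have hmE : Nat.Coprime (m : ℕ) E :=
    hme.mul_right (((hp.coprime_iff_not_dvd.mpr hpm).pow_left v).symm)
  have hb'E : Nat.Coprime b' E := by
    by_contra hc
    obtain ⟨r, hr, hrb, hre⟩ := Nat.Prime.not_coprime_iff_dvd.mp hc
    exact not_dvd_both hmE hr (hprimes r hr hrb) hre
  obtain ⟨k, hk1, hk2⟩ := Nat.chineseRemainder hb'E a (m : ℕ)
  set t := b' * (E * (a + (m : ℕ) + 1)) with ht
  have htpos : a + (m : ℕ) + 1 ≤ t := by
    have hE1 : 1 ≤ E := by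
      have := hp.one_lt
      have : 1 ≤ p ^ v := Nat.one_le_pow _ _ (by omega)
      calc (1:ℕ) ≤ 1 * 1 := by norm_num
      _ ≤ e * p ^ v := Nat.mul_le_mul he1 this
    calc a + (m : ℕ) + 1 = 1 * (1 * (a + (m : ℕ) + 1)) := by ring
    _ ≤ b' * (E * (a + (m : ℕ) + 1)) := Nat.mul_le_mul hb' (Nat.mul_le_mul hE1 (le_refl _))
  have hzb' : k + t ≡ a [MOD b'] := by
    have : k + t ≡ k [MOD b'] := by
      show (k + b' * (E * (a + (m : ℕ) + 1))) % b' = k % b'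
      exact Nat.add_mul_mod_self_left k b' _
    exact this.trans hk1
  have hzE : k + t ≡ (m : ℕ) [MOD E] := by
    have : k + t ≡ k [MOD E] := by
      have h2 : k + t = k + E * (b' * (a + (m : ℕ) + 1)) := by rw [ht]; ring
      rw [h2]
      show (k + E * (b' * (a + (m : ℕ) + 1))) % E = k % E
      exact Nat.add_mul_mod_self_left k E _
    exact this.trans hk2
  have hzpv : k + t ≡ a [MOD p ^ v] :=
    (hzE.of_dvd (dvd_mul_left (p ^ v) e)).trans hmod
  have hcop : Nat.Coprime (p ^ v) b' := (hp.coprime_iff_not_dvd.mpr hpb').pow_left v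
  have hzfull : k + t ≡ a [MOD p ^ v * b'] :=
    (Nat.modEq_and_modEq_iff_modEq_mul hcop).mp ⟨hzpv, hzb'⟩
  refine ⟨⟨k + t, by omega⟩, hsub (prog_anti (dvd_mul_right e (p ^ v)) (mem_prog (by simp; omega) hzE)),
    mem_prog (by simp; omega) hzfull⟩

lemma squarefree_dvd_of_primes {q m : ℕ} (hq : Squarefree q)
    (h : ∀ p : ℕ, p.Prime → p ∣ q → p ∣ m) : q ∣ m := by
  calc q = ∏ p ∈ q.primeFactors, p := (Nat.prod_primeFactors_of_squarefree hq).symm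
  _ ∣ m := Finset.prod_primes_dvd m
      (fun p hp => (Nat.prime_of_mem_primeFactors hp).prime)
      (fun p hp => h p (Nat.prime_of_mem_primeFactors hp) (Nat.dvd_of_mem_primeFactors hp))

/-- Key lemma for the reverse direction. -/
lemma key_not_dvd {q : ℕ} (x y : ℕ+) {b d : ℕ} (hb : 1 ≤ b) (hd : 1 ≤ d)
    (hxb : Nat.Coprime (x : ℕ) b) (hyd : Nat.Coprime (y : ℕ) d)
    (hsub : closure (Prog (x : ℕ) b) ∩ closure (Prog (y : ℕ) d) ⊆ {z : ℕ+ | q ∣ (z : ℕ)})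
    {p : ℕ} (hp : p.Prime) (hpq : p ∣ q) : ¬ p ∣ (x : ℕ) := by
  intro hpx
  have hpb : ¬ p ∣ b := fun h => not_dvd_both hxb hp hpx h
  -- Step A : q divides b * d
  have hqbd : q ∣ b * d := by
    have hm0U : (⟨b * d, Nat.mul_pos (by omega) (by omega)⟩ : ℕ+) ∈ closure (Prog (x : ℕ) b) :=
      mem_closure_of_primes_dvd x.pos hb hxb _ (fun r hr hrb => hrb.mul_right d)
    have hm0V : (⟨b * d, Nat.mul_pos (by omega) (by omega)⟩ : ℕ+) ∈ closure (Prog (y : ℕ) d) :=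
      mem_closure_of_primes_dvd y.pos hd hyd _ (fun r hr hrd => hrd.mul_left b)
    exact hsub ⟨hm0U, hm0V⟩
  have hpd : p ∣ d := (hp.dvd_mul.mp (hpq.trans hqbd)).resolve_left hpb
  have hpy : ¬ p ∣ (y : ℕ) := fun h => not_dvd_both hyd hp h hpd
  -- Step B : build a witness in the intersection of closures not divisible by p
  set v := d.factorization p with hvdef
  have hdne : d ≠ 0 := by omega
  have hv : 1 ≤ v := hp.factorization_pos_of_dvd hdne hpd
  set d' := ordCompl[p] d with hd'def
  have hfact : p ^ v * d' = d := Nat.ordProj_mul_ordCompl_eq_self d p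
  have hpd' : ¬ p ∣ d' := Nat.not_dvd_ordCompl hp hdne
  have hd'pos : 1 ≤ d' := Nat.ordCompl_pos p hdne
  have hcop : Nat.Coprime (p ^ v) (b * d') := by
    refine ((hp.coprime_iff_not_dvd.mpr ?_).pow_left v)
    intro h
    exact (hp.dvd_mul.mp h).elim hpb hpd'
  obtain ⟨k, hk1, hk2⟩ := Nat.chineseRemainder hcop (y : ℕ) 0
  set z := k + p ^ v * (b * d') with hz
  have hzpos : 0 < z := by
    have h1 : 1 ≤ p ^ v := Nat.one_le_pow _ _ hp.pos
    have h2 : 1 ≤ b * d' := Nat.mul_le_mul hb hd'pos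
    have : 1 ≤ p ^ v * (b * d') := Nat.mul_le_mul h1 h2
    omega
  have hzpv : z ≡ (y : ℕ) [MOD p ^ v] := by
    have : z ≡ k [MOD p ^ v] := by
      show (k + p ^ v * (b * d')) % p ^ v = k % p ^ v
      exact Nat.add_mul_mod_self_left k (p ^ v) _
    exact this.trans hk1
  have hbd'z : b * d' ∣ z := by
    have h1 : b * d' ∣ k := Nat.modEq_zero_iff_dvd.mp hk2
    exact Nat.dvd_add h1 (dvd_mul_left (b * d') (p ^ v))
  have hpz : ¬ p ∣ z := by
    intro h
    apply hpy
    have hpzy : z ≡ (y : ℕ) [MOD p] := hzpv.of_dvd (dvd_pow_self p (by omega))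
    have : (0 : ℕ) ≡ (y : ℕ) [MOD p] := (Nat.modEq_zero_iff_dvd.mpr h).symm.trans hpzy
    exact Nat.modEq_zero_iff_dvd.mp this.symm
  set Z : ℕ+ := ⟨z, hzpos⟩ with hZ
  have hZU : Z ∈ closure (Prog (x : ℕ) b) :=
    mem_closure_of_primes_dvd x.pos hb hxb Z
      (fun r hr hrb => dvd_trans (hrb.mul_right d') hbd'z)
  have hZV : Z ∈ closure (Prog (y : ℕ) d) := by
    rw [← hfact]
    exact mem_closure_mixed y.pos hp hv hpd' hd'pos (hfact ▸ hyd) Z hpz hzpv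
      (fun r hr hrd' => dvd_trans (hrd'.mul_left b) hbd'z)
  exact hpz (hpq.trans (hsub ⟨hZU, hZV⟩))

theorem squarefree_closure_intersection (x y : ℕ+) (hxy : x ≠ y)
    (q : ℕ) (hq : Squarefree q) (hq1 : 1 < q) :
    (Nat.Coprime q x ∧ Nat.Coprime q y ↔
      ∃ U V : Set ℕ+, IsOpen U ∧ IsOpen V ∧ x ∈ U ∧ y ∈ V ∧
        closure U ∩ closure V = {z : ℕ+ | q ∣ (z : ℕ)}) ∧
    (Nat.Coprime q x ∧ Nat.Coprime q y ↔
      ∃ U V : Set ℕ+, IsOpen U ∧ IsOpen V ∧ x ∈ U ∧ y ∈ V ∧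
        closure U ∩ closure V ⊆ {z : ℕ+ | q ∣ (z : ℕ)}) := by
  have fwd : Nat.Coprime q x ∧ Nat.Coprime q y →
      ∃ U V : Set ℕ+, IsOpen U ∧ IsOpen V ∧ x ∈ U ∧ y ∈ V ∧
        closure U ∩ closure V = {z : ℕ+ | q ∣ (z : ℕ)} := by
    rintro ⟨h1, h2⟩
    set k := (x : ℕ) + (y : ℕ) with hk
    have hqk : 1 ≤ q ^ k := Nat.one_le_pow _ _ (by omega)
    have hx : Nat.Coprime (x : ℕ) (q ^ k) := (h1.symm).pow_right k
    have hy : Nat.Coprime (y : ℕ) (q ^ k) := (h2.symm).pow_right k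
    refine ⟨Prog (x : ℕ) (q ^ k), Prog (y : ℕ) (q ^ k),
      isOpen_prog x.pos hqk hx, isOpen_prog y.pos hqk hy,
      self_mem_prog x _, self_mem_prog y _, ?_⟩
    ext z
    simp only [Set.mem_inter_iff, Set.mem_setOf_eq]
    constructor
    · rintro ⟨hzU, hzV⟩
      apply squarefree_dvd_of_primes hq
      intro p hp hpq
      by_contra hpz
      have hme : Nat.Coprime (z : ℕ) (p ^ k) :=
        ((hp.coprime_iff_not_dvd.mpr hpz).symm).pow_right k
      have hdvd : p ^ k ∣ q ^ k := pow_dvd_pow_of_dvd hpq k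
      have hpk1 : 1 ≤ p ^ k := Nat.one_le_pow _ _ hp.pos
      have hxz := modEq_of_mem_closure hzU hdvd hpk1 hme
      have hyz := modEq_of_mem_closure hzV hdvd hpk1 hme
      have hmod : (x : ℕ) ≡ (y : ℕ) [MOD p ^ k] := hxz.symm.trans hyz
      have hdvd2 : ((p : ℤ) ^ k) ∣ ((y : ℕ) : ℤ) - ((x : ℕ) : ℤ) := by
        have := hmod.dvd
        push_cast at this ⊢
        exact this
      have hne : ((y : ℕ) : ℤ) - ((x : ℕ) : ℤ) ≠ 0 := by
        intro h
        apply hxy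
        have : (x : ℕ) = (y : ℕ) := by omega
        exact PNat.coe_injective this
      have hle : ((p : ℤ) ^ k) ≤ |((y : ℕ) : ℤ) - ((x : ℕ) : ℤ)| :=
        Int.le_of_dvd (abs_pos.mpr hne) ((dvd_abs _ _).mpr hdvd2)
      have h2k : k < 2 ^ k := Nat.lt_two_pow_self (n := k)
      have hpk : 2 ^ k ≤ p ^ k := Nat.pow_le_pow_left hp.two_le k
      have habs : |((y : ℕ) : ℤ) - ((x : ℕ) : ℤ)| ≤ (k : ℤ) := by
        rw [hk]
        rcases abs_cases (((y : ℕ) : ℤ) - ((x : ℕ) : ℤ)) with ⟨h, _⟩ | ⟨h, _⟩ <;>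
          · rw [h]; push_cast; omega
      have : ((p : ℤ) ^ k) ≤ (k : ℤ) := hle.trans habs
      have hfin : (p : ℕ) ^ k ≤ k := by exact_mod_cast this
      omega
    · intro hqz
      constructor <;>
        [exact mem_closure_of_primes_dvd x.pos hqk hx z
          (fun r hr hrq => dvd_trans (hr.dvd_of_dvd_pow hrq) hqz);
         exact mem_closure_of_primes_dvd y.pos hqk hy z
          (fun r hr hrq => dvd_trans (hr.dvd_of_dvd_pow hrq) hqz)]
  have bwd : (∃ U V : Set ℕ+, IsOpen U ∧ IsOpen V ∧ x ∈ U ∧ y ∈ V ∧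
      closure U ∩ closure V ⊆ {z : ℕ+ | q ∣ (z : ℕ)}) →
      Nat.Coprime q x ∧ Nat.Coprime q y := by
    rintro ⟨U, V, hU, hV, hxU, hyV, hsub⟩
    obtain ⟨b, hb1, hxb, hbU⟩ := exists_basic hU x hxU
    obtain ⟨d, hd1, hyd, hdV⟩ := exists_basic hV y hyV
    have hsub' : closure (Prog (x : ℕ) b) ∩ closure (Prog (y : ℕ) d) ⊆
        {z : ℕ+ | q ∣ (z : ℕ)} :=
      fun z hz => hsub ⟨closure_mono hbU hz.1, closure_mono hdV hz.2⟩
    have hsub'' : closure (Prog (y : ℕ) d) ∩ closure (Prog (x : ℕ) b) ⊆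
        {z : ℕ+ | q ∣ (z : ℕ)} := by rwa [Set.inter_comm]
    constructor
    · by_contra hc
      obtain ⟨p, hp, hpq, hpx⟩ := Nat.Prime.not_coprime_iff_dvd.mp hc
      exact key_not_dvd x y hb1 hd1 hxb hyd hsub' hp hpq hpx
    · by_contra hc
      obtain ⟨p, hp, hpq, hpy⟩ := Nat.Prime.not_coprime_iff_dvd.mp hc
      exact key_not_dvd y x hd1 hb1 hyd hxb hsub'' hp hpq hpy
  haveI := golombTopology
  refine ⟨⟨fwd, ?_⟩, ⟨fun h => ?_, bwd⟩⟩
  · rintro ⟨U, V, h1, h2, h3, h4, h5⟩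
    exact bwd ⟨U, V, h1, h2, h3, h4, h5.le⟩
  · obtain ⟨U, V, a1, a2, a3, a4, a5⟩ := fwd h
    exact ⟨U, V, a1, a2, a3, a4, a5.le⟩
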